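/- For any i, i', i'' ∈ I and j, j', j'' ∈ J (with not all of i,i',i'' equal, not all of j,j',j'' equal, and no two of the pairs (i,j),(i',j'),(i'',j'') equal), the identity s_=(i',j',i'',j'')s_=(i,j,i'',j') + s_=(i'',j'',i,j)s_=(i',j',i,j'') + s_=(i,j,i',j')s_=(i'',j'',i',j) = 0 holds. -/

import Mathlib

/-- The counterclockwise cyclic distance from `a` to `b` among the boundary points
`b_1, …, b_n` (labelled counterclockwise). -/
def cdist (n a b : ℕ) : ℕ := (b + n - a) % n

/-- `btw n a b c` means `a ≺ b ≺ c`: `b` lies strictly between `a` and `c`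
in the counterclockwise cyclic order on `b_1, …, b_n`. -/
def btw (n a b c : ℕ) : Prop := 0 < cdist n a b ∧ cdist n a b < cdist n a c

/-- `ord4 n a b c d` means `a ≺ b ≺ c ≺ d` in the counterclockwise cyclic order. -/
def ord4 (n a b c d : ℕ) : Prop :=
  0 < cdist n a b ∧ cdist n a b < cdist n a c ∧ cdist n a c < cdist n a d

open Classical in
/-- The function `s_=(i,j,i',j')` of the paper. -/
noncomputable def sEq (n i j i' j' : ℕ) : ℚ :=
  if ord4 n i i' j' j then 1
  else if ord4 n i' i j j' then -1
  else if (i = i' ∧ btw n i j' j) ∨ (j = j' ∧ btw n i i' j) then 1/2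
  else if (i = i' ∧ btw n i j j') ∨ (j = j' ∧ btw n i' i j) then -1/2
  else 0

open Classical in
/-- The function `s_×(i,j,i',j')` of the paper. -/
noncomputable def sCross (n i j i' j' : ℕ) : ℚ :=
  if ord4 n i' i j' j then 1
  else if ord4 n i i' j j' then -1
  else if (i = i' ∧ btw n i j' j) ∨ (j = j' ∧ btw n i' i j) then 1/2
  else if (i = i' ∧ btw n i j j') ∨ (j = j' ∧ btw n i i' j) then -1/2
  else 0

lemma cdist_char (n a b : ℕ) (ha1 : 1 ≤ a) (ha2 : a ≤ n) (hb1 : 1 ≤ b) (hb2 : b ≤ n) :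
    (a ≤ b ∧ cdist n a b = b - a) ∨ (b < a ∧ cdist n a b = b + n - a) := by
  unfold cdist
  rcases le_or_gt a b with h | h
  · left
    refine ⟨h, ?_⟩
    rw [Nat.mod_eq_sub_mod (by omega), Nat.mod_eq_of_lt (by omega)]
    omega
  · right
    exact ⟨h, Nat.mod_eq_of_lt (by omega)⟩

def cyc3b (a b c : ℕ) : Bool := (a<b && b<c) || (b<c && c<a) || (c<a && a<b)
def cyc4b (a b c d : ℕ) : Bool :=
  (a<b && b<c && c<d) || (b<c && c<d && d<a) || (c<d && d<a && a<b) || (d<a && a<b && b<c)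

lemma btw_iff' (n a b c : ℕ) (ha1 : 1 ≤ a) (ha2 : a ≤ n) (hb1 : 1 ≤ b) (hb2 : b ≤ n)
    (hc1 : 1 ≤ c) (hc2 : c ≤ n) : _root_.btw n a b c ↔ cyc3b a b c = true := by
  have h1 := cdist_char n a b ha1 ha2 hb1 hb2
  have h2 := cdist_char n a c ha1 ha2 hc1 hc2
  unfold _root_.btw cyc3b
  simp only [Bool.or_eq_true, Bool.and_eq_true, decide_eq_true_eq]
  omega

lemma ord4_iff (n a b c d : ℕ) (ha1 : 1 ≤ a) (ha2 : a ≤ n) (hb1 : 1 ≤ b) (hb2 : b ≤ n)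
    (hc1 : 1 ≤ c) (hc2 : c ≤ n) (hd1 : 1 ≤ d) (hd2 : d ≤ n) :
    ord4 n a b c d ↔ cyc4b a b c d = true := by
  have h1 := cdist_char n a b ha1 ha2 hb1 hb2
  have h2 := cdist_char n a c ha1 ha2 hc1 hc2
  have h3 := cdist_char n a d ha1 ha2 hd1 hd2
  unfold ord4 cyc4b
  simp only [Bool.or_eq_true, Bool.and_eq_true, decide_eq_true_eq]
  omega

def sT (a b c d : ℕ) : ℤ :=
  if cyc4b a c d b then 2 else if cyc4b c a b d then -2
  else if (a==c && cyc3b a d b) || (b==d && cyc3b a c b) then 1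
  else if (a==c && cyc3b a b d) || (b==d && cyc3b c a b) then -1 else 0

lemma sEq_eq_sT (n a b c d : ℕ) (ha1 : 1 ≤ a) (ha2 : a ≤ n) (hb1 : 1 ≤ b) (hb2 : b ≤ n)
    (hc1 : 1 ≤ c) (hc2 : c ≤ n) (hd1 : 1 ≤ d) (hd2 : d ≤ n) :
    sEq n a b c d = (sT a b c d : ℚ) / 2 := by
  have o1 := ord4_iff n a c d b ha1 ha2 hc1 hc2 hd1 hd2 hb1 hb2
  have o2 := ord4_iff n c a b d hc1 hc2 ha1 ha2 hb1 hb2 hd1 hd2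
  have w1 := btw_iff' n a d b ha1 ha2 hd1 hd2 hb1 hb2
  have w2 := btw_iff' n a c b ha1 ha2 hc1 hc2 hb1 hb2
  have w3 := btw_iff' n a b d ha1 ha2 hb1 hb2 hd1 hd2
  have w4 := btw_iff' n c a b hc1 hc2 ha1 ha2 hb1 hb2
  unfold sEq sT
  simp only [o1, o2, w1, w2, w3, w4, Bool.or_eq_true, Bool.and_eq_true, beq_iff_eq]
  split_ifs <;> norm_num

lemma eq_of_lt_iff {a b A B : ℕ} (h1 : a < b ↔ A < B) (h2 : b < a ↔ B < A) :
    a = b ↔ A = B := by omega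

lemma cyc3b_congr {a b c A B C : ℕ} (hab : a < b ↔ A < B) (hbc : b < c ↔ B < C)
    (hca : c < a ↔ C < A) : cyc3b a b c = cyc3b A B C := by
  rw [Bool.eq_iff_iff]
  unfold cyc3b
  simp only [Bool.or_eq_true, Bool.and_eq_true, decide_eq_true_eq]
  exact or_congr (or_congr (and_congr hab hbc) (and_congr hbc hca)) (and_congr hca hab)

lemma cyc4b_congr {a b c d A B C D : ℕ} (hab : a < b ↔ A < B) (hbc : b < c ↔ B < C)
    (hcd : c < d ↔ C < D) (hda : d < a ↔ D < A) : cyc4b a b c d = cyc4b A B C D := by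
  rw [Bool.eq_iff_iff]
  unfold cyc4b
  simp only [Bool.or_eq_true, Bool.and_eq_true, decide_eq_true_eq]
  exact or_congr (or_congr (or_congr (and_congr (and_congr hab hbc) hcd)
    (and_congr (and_congr hbc hcd) hda)) (and_congr (and_congr hcd hda) hab))
    (and_congr (and_congr hda hab) hbc)

lemma sT_congr {a b c d A B C D : ℕ}
    (h1 : a < b ↔ A < B) (h2 : b < a ↔ B < A)
    (h3 : a < c ↔ A < C) (h4 : c < a ↔ C < A)
    (h5 : a < d ↔ A < D) (h6 : d < a ↔ D < A)
    (h7 : b < c ↔ B < C) (h8 : c < b ↔ C < B)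
    (h9 : b < d ↔ B < D) (h10 : d < b ↔ D < B)
    (h11 : c < d ↔ C < D) (h12 : d < c ↔ D < C) :
    sT a b c d = sT A B C D := by
  have e1 : cyc4b a c d b = cyc4b A C D B := cyc4b_congr h3 h11 h10 h2
  have e2 : cyc4b c a b d = cyc4b C A B D := cyc4b_congr h4 h1 h9 h12
  have g1 : cyc3b a d b = cyc3b A D B := cyc3b_congr h5 h10 h2
  have g2 : cyc3b a c b = cyc3b A C B := cyc3b_congr h3 h8 h2
  have g3 : cyc3b a b d = cyc3b A B D := cyc3b_congr h1 h9 h6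
  have g4 : cyc3b c a b = cyc3b C A B := cyc3b_congr h4 h1 h7
  have q1 : (a == c) = (A == C) := by
    rw [Bool.eq_iff_iff]
    simp only [beq_iff_eq]
    exact eq_of_lt_iff h3 h4
  have q2 : (b == d) = (B == D) := by
    rw [Bool.eq_iff_iff]
    simp only [beq_iff_eq]
    exact eq_of_lt_iff h9 h10
  unfold sT
  rw [e1, e2, g1, g2, g3, g4, q1, q2]

def okP (A B C D E F : ℕ) : Prop :=
  (¬(A=B∧A=C) ∧ ¬(D=E∧D=F) ∧ ¬(A=B∧D=E) ∧ ¬(A=C∧D=F) ∧ ¬(B=C∧E=F) ∧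
    A≠D ∧ A≠E ∧ A≠F ∧ B≠D ∧ B≠E ∧ B≠F ∧ C≠D ∧ C≠E ∧ C≠F) →
  sT B E C F * sT A D C E + sT C F A D * sT B E A F + sT A D B E * sT C F B D = 0

instance (A B C D E F : ℕ) : Decidable (okP A B C D E F) := by
  unfold okP; infer_instance

set_option maxHeartbeats 10000000 in
lemma key : ((List.range 6).all fun A => (List.range 6).all fun B =>
    (List.range 6).all fun C => (List.range 6).all fun D =>
    (List.range 6).all fun E => (List.range 6).all fun F =>
    decide (okP A B C D E F)) = true := by decide

lemma okP_all (A B C D E F : ℕ) (hA : A < 6) (hB : B < 6) (hC : C < 6)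
    (hD : D < 6) (hE : E < 6) (hF : F < 6) : okP A B C D E F := by
  have h1 := List.all_eq_true.mp key A (List.mem_range.mpr hA)
  have h2 := List.all_eq_true.mp h1 B (List.mem_range.mpr hB)
  have h3 := List.all_eq_true.mp h2 C (List.mem_range.mpr hC)
  have h4 := List.all_eq_true.mp h3 D (List.mem_range.mpr hD)
  have h5 := List.all_eq_true.mp h4 E (List.mem_range.mpr hE)
  have h6 := List.all_eq_true.mp h5 F (List.mem_range.mpr hF)
  exact of_decide_eq_true h6

-- rank lemmas
lemma rank_lt_card {S : Finset ℕ} {x : ℕ} (hx : x ∈ S) :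
    (S.filter (fun y => y < x)).card < S.card := by
  apply Finset.card_lt_card
  constructor
  · exact Finset.filter_subset _ _
  · intro hsub
    have := hsub hx
    simp at this
lemma rank_mono {S : Finset ℕ} {x y : ℕ} (hx : x ∈ S) (hxy : x < y) :
    (S.filter (fun z => z < x)).card < (S.filter (fun z => z < y)).card := by
  apply Finset.card_lt_card
  constructor
  · intro z hz
    rw [Finset.mem_filter] at *
    exact ⟨hz.1, by omega⟩
  · intro hsub
    have := hsub (Finset.mem_filter.mpr ⟨hx, hxy⟩)
    simp at this

lemma rank_lt_iff {S : Finset ℕ} {x y : ℕ} (hx : x ∈ S) (hy : y ∈ S) :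
    x < y ↔ (S.filter (fun z => z < x)).card < (S.filter (fun z => z < y)).card := by
  constructor
  · exact fun h => rank_mono hx h
  · intro h
    rcases Nat.lt_trichotomy x y with h' | h' | h'
    · exact h'
    · subst h'; omega
    · exact absurd (rank_mono hy h') (by omega)

lemma rank_eq_iff {S : Finset ℕ} {x y : ℕ} (hx : x ∈ S) (hy : y ∈ S) :
    x = y ↔ (S.filter (fun z => z < x)).card = (S.filter (fun z => z < y)).card := by
  have h1 := rank_lt_iff hx hy
  have h2 := rank_lt_iff hy hx
  constructor
  · intro h; subst h; rfl
  · intro h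
    rcases Nat.lt_trichotomy x y with h' | h' | h'
    · exact absurd (rank_mono hx h') (by omega)
    · exact h'
    · exact absurd (rank_mono hy h') (by omega)

/-- The second identity in (3.10) of the paper: for sources `i, i', i''` and sinks
`j, j', j''` with not all sources equal, not all sinks equal, and no two of the
pairs `(i,j)`, `(i',j')`, `(i'',j'')` equal,
`s_=(i',j',i'',j'')s_=(i,j,i'',j') + s_=(i'',j'',i,j)s_=(i',j',i,j'')
 + s_=(i,j,i',j')s_=(i'',j'',i',j) = 0`. -/
theorem sEq_threeterm_identity (n : ℕ) (I J : Finset ℕ)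
    (hdisj : Disjoint I J) (hunion : I ∪ J = Finset.Icc 1 n)
    (i i' i'' : ℕ) (hi : i ∈ I) (hi' : i' ∈ I) (hi'' : i'' ∈ I)
    (j j' j'' : ℕ) (hj : j ∈ J) (hj' : j' ∈ J) (hj'' : j'' ∈ J)
    (hnotI : ¬ (i = i' ∧ i = i''))
    (hnotJ : ¬ (j = j' ∧ j = j''))
    (hp1 : ¬ (i = i' ∧ j = j'))
    (hp2 : ¬ (i = i'' ∧ j = j''))
    (hp3 : ¬ (i' = i'' ∧ j' = j'')) :
    sEq n i' j' i'' j'' * sEq n i j i'' j' +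
    sEq n i'' j'' i j * sEq n i' j' i j'' +
    sEq n i j i' j' * sEq n i'' j'' i' j = 0 := by
  have hmem : ∀ x ∈ I ∪ J, 1 ≤ x ∧ x ≤ n := by
    intro x hx
    rw [hunion] at hx
    exact Finset.mem_Icc.mp hx
  obtain ⟨ha1, ha2⟩ := hmem i (Finset.mem_union_left _ hi)
  obtain ⟨hb1, hb2⟩ := hmem i' (Finset.mem_union_left _ hi')
  obtain ⟨hc1, hc2⟩ := hmem i'' (Finset.mem_union_left _ hi'')
  obtain ⟨hd1, hd2⟩ := hmem j (Finset.mem_union_right _ hj)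
  obtain ⟨he1, he2⟩ := hmem j' (Finset.mem_union_right _ hj')
  obtain ⟨hf1, hf2⟩ := hmem j'' (Finset.mem_union_right _ hj'')
  have hne : ∀ x ∈ I, ∀ y ∈ J, x ≠ y := fun x hx y hy h =>
    Finset.disjoint_left.mp hdisj hx (h ▸ hy)
  have q1 := hne i hi j hj
  have q2 := hne i hi j' hj'
  have q3 := hne i hi j'' hj''
  have q4 := hne i' hi' j hj
  have q5 := hne i' hi' j' hj'
  have q6 := hne i' hi' j'' hj''
  have q7 := hne i'' hi'' j hj
  have q8 := hne i'' hi'' j' hj'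
  have q9 := hne i'' hi'' j'' hj''
  set S : Finset ℕ := {i, i', i'', j, j', j''} with hS
  have hSi : i ∈ S := by simp [hS]
  have hSi' : i' ∈ S := by simp [hS]
  have hSi'' : i'' ∈ S := by simp [hS]
  have hSj : j ∈ S := by simp [hS]
  have hSj' : j' ∈ S := by simp [hS]
  have hSj'' : j'' ∈ S := by simp [hS]
  have hScard : S.card ≤ 6 := by
    apply le_trans (Finset.card_insert_le _ _)
    apply Nat.succ_le_succ
    apply le_trans (Finset.card_insert_le _ _)
    apply Nat.succ_le_succ
    apply le_trans (Finset.card_insert_le _ _)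
    apply Nat.succ_le_succ
    apply le_trans (Finset.card_insert_le _ _)
    apply Nat.succ_le_succ
    apply le_trans (Finset.card_insert_le _ _)
    apply Nat.succ_le_succ
    simp
  set r : ℕ → ℕ := fun x => (S.filter (fun z => z < x)).card with hr
  have hlt : ∀ x, x ∈ S → ∀ y, y ∈ S → (x < y ↔ r x < r y) := fun x hx y hy =>
    rank_lt_iff hx hy
  have heq : ∀ x, x ∈ S → ∀ y, y ∈ S → (x = y ↔ r x = r y) := fun x hx y hy =>
    rank_eq_iff hx hy
  have hlt6 : ∀ x, x ∈ S → r x < 6 := fun x hx =>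
    lt_of_lt_of_le (rank_lt_card hx) hScard
  have hkey := okP_all (r i) (r i') (r i'') (r j) (r j') (r j'')
    (hlt6 i hSi) (hlt6 i' hSi') (hlt6 i'' hSi'') (hlt6 j hSj) (hlt6 j' hSj') (hlt6 j'' hSj'')
  have hz := hkey ⟨
    fun ⟨u, v⟩ => hnotI ⟨(heq i hSi i' hSi').mpr u, (heq i hSi i'' hSi'').mpr v⟩,
    fun ⟨u, v⟩ => hnotJ ⟨(heq j hSj j' hSj').mpr u, (heq j hSj j'' hSj'').mpr v⟩,
    fun ⟨u, v⟩ => hp1 ⟨(heq i hSi i' hSi').mpr u, (heq j hSj j' hSj').mpr v⟩,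
    fun ⟨u, v⟩ => hp2 ⟨(heq i hSi i'' hSi'').mpr u, (heq j hSj j'' hSj'').mpr v⟩,
    fun ⟨u, v⟩ => hp3 ⟨(heq i' hSi' i'' hSi'').mpr u, (heq j' hSj' j'' hSj'').mpr v⟩,
    fun u => q1 ((heq i hSi j hSj).mpr u),
    fun u => q2 ((heq i hSi j' hSj').mpr u),
    fun u => q3 ((heq i hSi j'' hSj'').mpr u),
    fun u => q4 ((heq i' hSi' j hSj).mpr u),
    fun u => q5 ((heq i' hSi' j' hSj').mpr u),
    fun u => q6 ((heq i' hSi' j'' hSj'').mpr u),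
    fun u => q7 ((heq i'' hSi'' j hSj).mpr u),
    fun u => q8 ((heq i'' hSi'' j' hSj').mpr u),
    fun u => q9 ((heq i'' hSi'' j'' hSj'').mpr u)⟩
  have T1 : sT i' j' i'' j'' = sT (r i') (r j') (r i'') (r j'') :=
    sT_congr (hlt i' hSi' j' hSj') (hlt j' hSj' i' hSi') (hlt i' hSi' i'' hSi'') (hlt i'' hSi'' i' hSi') (hlt i' hSi' j'' hSj'') (hlt j'' hSj'' i' hSi') (hlt j' hSj' i'' hSi'') (hlt i'' hSi'' j' hSj') (hlt j' hSj' j'' hSj'') (hlt j'' hSj'' j' hSj') (hlt i'' hSi'' j'' hSj'') (hlt j'' hSj'' i'' hSi'')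
  have T2 : sT i j i'' j' = sT (r i) (r j) (r i'') (r j') :=
    sT_congr (hlt i hSi j hSj) (hlt j hSj i hSi) (hlt i hSi i'' hSi'') (hlt i'' hSi'' i hSi) (hlt i hSi j' hSj') (hlt j' hSj' i hSi) (hlt j hSj i'' hSi'') (hlt i'' hSi'' j hSj) (hlt j hSj j' hSj') (hlt j' hSj' j hSj) (hlt i'' hSi'' j' hSj') (hlt j' hSj' i'' hSi'')
  have T3 : sT i'' j'' i j = sT (r i'') (r j'') (r i) (r j) :=
    sT_congr (hlt i'' hSi'' j'' hSj'') (hlt j'' hSj'' i'' hSi'') (hlt i'' hSi'' i hSi) (hlt i hSi i'' hSi'') (hlt i'' hSi'' j hSj) (hlt j hSj i'' hSi'') (hlt j'' hSj'' i hSi) (hlt i hSi j'' hSj'') (hlt j'' hSj'' j hSj) (hlt j hSj j'' hSj'') (hlt i hSi j hSj) (hlt j hSj i hSi)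
  have T4 : sT i' j' i j'' = sT (r i') (r j') (r i) (r j'') :=
    sT_congr (hlt i' hSi' j' hSj') (hlt j' hSj' i' hSi') (hlt i' hSi' i hSi) (hlt i hSi i' hSi') (hlt i' hSi' j'' hSj'') (hlt j'' hSj'' i' hSi') (hlt j' hSj' i hSi) (hlt i hSi j' hSj') (hlt j' hSj' j'' hSj'') (hlt j'' hSj'' j' hSj') (hlt i hSi j'' hSj'') (hlt j'' hSj'' i hSi)
  have T5 : sT i j i' j' = sT (r i) (r j) (r i') (r j') :=
    sT_congr (hlt i hSi j hSj) (hlt j hSj i hSi) (hlt i hSi i' hSi') (hlt i' hSi' i hSi) (hlt i hSi j' hSj') (hlt j' hSj' i hSi) (hlt j hSj i' hSi') (hlt i' hSi' j hSj) (hlt j hSj j' hSj') (hlt j' hSj' j hSj) (hlt i' hSi' j' hSj') (hlt j' hSj' i' hSi')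
  have T6 : sT i'' j'' i' j = sT (r i'') (r j'') (r i') (r j) :=
    sT_congr (hlt i'' hSi'' j'' hSj'') (hlt j'' hSj'' i'' hSi'') (hlt i'' hSi'' i' hSi') (hlt i' hSi' i'' hSi'') (hlt i'' hSi'' j hSj) (hlt j hSj i'' hSi'') (hlt j'' hSj'' i' hSi') (hlt i' hSi' j'' hSj'') (hlt j'' hSj'' j hSj) (hlt j hSj j'' hSj'') (hlt i' hSi' j hSj) (hlt j hSj i' hSi')
  rw [sEq_eq_sT n i' j' i'' j'' hb1 hb2 he1 he2 hc1 hc2 hf1 hf2,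
      sEq_eq_sT n i j i'' j' ha1 ha2 hd1 hd2 hc1 hc2 he1 he2,
      sEq_eq_sT n i'' j'' i j hc1 hc2 hf1 hf2 ha1 ha2 hd1 hd2,
      sEq_eq_sT n i' j' i j'' hb1 hb2 he1 he2 ha1 ha2 hf1 hf2,
      sEq_eq_sT n i j i' j' ha1 ha2 hd1 hd2 hb1 hb2 he1 he2,
      sEq_eq_sT n i'' j'' i' j hc1 hc2 hf1 hf2 hb1 hb2 hd1 hd2,
      T1, T2, T3, T4, T5, T6]
  have hq : ((sT (r i') (r j') (r i'') (r j'') * sT (r i) (r j) (r i'') (r j') +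
      sT (r i'') (r j'') (r i) (r j) * sT (r i') (r j') (r i) (r j'') +
      sT (r i) (r j) (r i') (r j') * sT (r i'') (r j'') (r i') (r j) : ℤ) : ℚ) = 0 := by
    rw [hz]; norm_num
  push_cast at hq
  linear_combination hq / 4
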